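/- For λ ∈ ℂ∖{0}, let J^λ be the Jordan superalgebra over ℂ of type (2,3) with homogeneous basis {e₁, e₂; f₁, f₂, f₃} (e_i even, f_j odd) and nonzero products e₁² = e₂, e₁f₂ = f₂e₁ = f₁, f₁f₃ = −f₃f₁ = λe₂, f₂f₃ = −f₃f₂ = e₁ (all other products of basis vectors zero). Then for λ₁, λ₂ ∈ ℂ∖{0}, the superalgebras J^{λ₁} and J^{λ₂} are isomorphic via a grading-preserving algebra isomorphism if and only if λ₁ = λ₂. -/
import Mathlib


noncomputable section

/-- The underlying ℤ/2-graded vector space of type `(m,n)`: even part `Fin m → ℂ`,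
odd part `Fin n → ℂ`. -/
abbrev GV (m n : ℕ) : Type := (Fin m → ℂ) × (Fin n → ℂ)

/-- A superalgebra structure tensor of type `(m,n)`: structure constants
`c i j k` (even·even), `ρ i j k` (even·odd) and `Γ i j k` (odd·odd). -/
abbrev Tensor (m n : ℕ) : Type :=
  (Fin m → Fin m → Fin m → ℂ) × (Fin m → Fin n → Fin n → ℂ) × (Fin n → Fin n → Fin m → ℂ)

/-- The ℤ/2-graded multiplication on `GV m n` determined by a structure tensor. -/
def mulOf {m n : ℕ} (μ : Tensor m n) (x y : GV m n) : GV m n :=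
  (fun k => (∑ i, ∑ j, x.1 i * y.1 j * μ.1 i j k) + ∑ i, ∑ j, x.2 i * y.2 j * μ.2.2 i j k,
   fun k => (∑ i, ∑ j, x.1 i * y.2 j * μ.2.1 i j k) + ∑ i, ∑ j, y.1 i * x.2 j * μ.2.1 i j k)

/-- `x` is homogeneous of parity `p` (`p = 0`: even, `p = 1`: odd). -/
def IsHom {m n : ℕ} (p : ℕ) (x : GV m n) : Prop :=
  (p = 0 ∧ x.2 = 0) ∨ (p = 1 ∧ x.1 = 0)

/-- The sign `(-1)^k`. -/
def sgn (k : ℕ) : ℂ := (-1 : ℂ) ^ k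

/-- The super-Jordan expression `J^s(w; x, y, z)` for homogeneous elements of
parities `pw, px, py, pz`. -/
def superJ {m n : ℕ} (μ : Tensor m n) (pw px py pz : ℕ) (w x y z : GV m n) : GV m n :=
  mulOf μ (mulOf μ w x) (mulOf μ y z)
    + sgn (px * py) • mulOf μ (mulOf μ w y) (mulOf μ x z)
    + sgn ((px + py) * pz) • mulOf μ (mulOf μ w z) (mulOf μ x y)
    - sgn (pw * px) • mulOf μ x (mulOf μ w (mulOf μ y z))
    - sgn (py * (pw + px)) • mulOf μ y (mulOf μ w (mulOf μ x z))
    - sgn (pz * (pw + px + py)) • mulOf μ z (mulOf μ w (mulOf μ x y))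

/-- `μ` is a Jordan superalgebra structure: supercommutativity and the Jordan
superidentity hold for all homogeneous elements. -/
def IsJordanSuper {m n : ℕ} (μ : Tensor m n) : Prop :=
  (∀ (px py : ℕ) (x y : GV m n), IsHom px x → IsHom py y →
      mulOf μ x y = sgn (px * py) • mulOf μ y x) ∧
  (∀ (pw px py pz : ℕ) (w x y z : GV m n),
      IsHom pw w → IsHom px x → IsHom py y → IsHom pz z →
      superJ μ pw px py pz w x y z = 0)

/-- The product of two graded subspaces: the span of all products. -/
def mulSub {m n : ℕ} (μ : Tensor m n) (A B : Submodule ℂ (GV m n)) : Submodule ℂ (GV m n) :=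
  Submodule.span ℂ {z | ∃ a ∈ A, ∃ b ∈ B, z = mulOf μ a b}

/-- The powers `J^k`: `J^1 = J` and `J^{k+1} = Σ_{i=1}^{k} J^i · J^{k+1-i}`. -/
def powT {m n : ℕ} (μ : Tensor m n) : ℕ → Submodule ℂ (GV m n)
  | 0 => ⊤
  | 1 => ⊤
  | (k + 2) => ⨆ i : Fin (k + 1), mulSub μ (powT μ ((i : ℕ) + 1)) (powT μ (k + 1 - (i : ℕ)))
  decreasing_by
  · have := i.isLt; omega
  · omega

/-- `μ` is nilpotent: some power vanishes. -/
def IsNilpotentT {m n : ℕ} (μ : Tensor m n) : Prop :=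
  ∃ k : ℕ, 1 ≤ k ∧ powT μ k = ⊥

/-- A grading-preserving algebra isomorphism between the superalgebras determined
by `μ` and `μ'`. -/
def Iso {m n : ℕ} (μ μ' : Tensor m n) : Prop :=
  ∃ (T : (Fin m → ℂ) ≃ₗ[ℂ] (Fin m → ℂ)) (S : (Fin n → ℂ) ≃ₗ[ℂ] (Fin n → ℂ)),
    ∀ x y : GV m n,
      (T ((mulOf μ x y).1), S ((mulOf μ x y).2)) = mulOf μ' (T x.1, S x.2) (T y.1, S y.2)

/-- `μ` degenerates to `μ'`: `μ'` lies in the closure of the orbit of `μ` under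
base change (in the standard topology). -/
def degenerates {m n : ℕ} (μ μ' : Tensor m n) : Prop :=
  μ' ∈ closure {ν : Tensor m n | Iso μ ν}

/-- Standard even basis vector `e_i`. -/
def eps {m n : ℕ} (i : Fin m) : GV m n := (Pi.single i 1, 0)

/-- Standard odd basis vector `f_j`. -/
def ph {m n : ℕ} (j : Fin n) : GV m n := (0, Pi.single j 1)


/-- A tensor of type (2,3) with products `e₁² = a·e₂`, `e₁f_j = Σ_k R1 j k f_k`,
`e₂f_j = Σ_k R2 j k f_k` and `f_if_j = W i j · e₁ + Θ i j · e₂`. -/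
def T23 (a : ℂ) (R1 R2 W Θ : Fin 3 → Fin 3 → ℂ) : Tensor 2 3 :=
  (fun i j k => if i = 0 ∧ j = 0 ∧ k = 1 then a else 0,
   fun i => if i = 0 then R1 else R2,
   fun i j k => if k = 0 then W i j else Θ i j)

/-- `e·f₂ = f₁`. -/
def P21 : Fin 3 → Fin 3 → ℂ := ![![0,0,0], ![1,0,0], ![0,0,0]]
/-- `e·f₃ = f₂`. -/
def P32 : Fin 3 → Fin 3 → ℂ := ![![0,0,0], ![0,0,0], ![0,1,0]]
/-- `e·f₃ = f₁`. -/
def P31 : Fin 3 → Fin 3 → ℂ := ![![0,0,0], ![0,0,0], ![1,0,0]]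
/-- `e·f₂ = f₃`. -/
def P23 : Fin 3 → Fin 3 → ℂ := ![![0,0,0], ![0,0,1], ![0,0,0]]
/-- `f₁f₂ = e`. -/
def W12 : Fin 3 → Fin 3 → ℂ := ![![0,1,0], ![-1,0,0], ![0,0,0]]
/-- `f₁f₃ = e`. -/
def W13 : Fin 3 → Fin 3 → ℂ := ![![0,0,1], ![0,0,0], ![-1,0,0]]
/-- `f₂f₃ = e`. -/
def W23 : Fin 3 → Fin 3 → ℂ := ![![0,0,0], ![0,0,1], ![0,-1,0]]

/-- The family `(2,3)₃₁^λ`: `e₁² = e₂`, `e₁f₂ = f₁`, `f₁f₃ = λe₂`, `f₂f₃ = e₁`. -/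
def A31 (l : ℂ) : Tensor 2 3 := T23 1 P21 0 W23 (l • W13)

/-- The family `(2,3)₄₃^γ`: `e₁² = e₂`, `e₁f₂ = f₃`, `e₁f₃ = γf₁`, `e₂f₂ = f₁`. -/
def A43 (g : ℂ) : Tensor 2 3 := T23 1 (P23 + g • P31) P21 0 0

/-- The family `(2,3)₄₄^φ`: `e₁² = e₂`, `e₁f₂ = f₃`, `e₁f₃ = φf₁`, `e₂f₂ = f₁`,
`f₂f₃ = e₂`. -/
def A44 (p : ℂ) : Tensor 2 3 := T23 1 (P23 + p • P31) P21 0 W23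


lemma mulA31 (l : ℂ) (u v : GV 2 3) :
    mulOf (A31 l) u v =
      (fun k => if k = 0 then u.2 1 * v.2 2 - u.2 2 * v.2 1
                else u.1 0 * v.1 0 + l * (u.2 0 * v.2 2 - u.2 2 * v.2 0),
       fun k => if k = 0 then u.1 0 * v.2 1 + v.1 0 * u.2 1 else 0) := by
  unfold mulOf A31 T23
  refine Prod.ext (funext fun k => ?_) (funext fun k => ?_) <;> fin_cases k <;>
    simp [Fin.sum_univ_succ, W23, W13, P21, Matrix.vecHead, Matrix.vecTail] <;> ring

/-- the superalgebras (2,3)₃₁^λ are isomorphic iff the parameters agree. -/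
theorem stmt5 : ∀ x y : ℂ, x ≠ 0 → y ≠ 0 → (Iso (A31 x) (A31 y) ↔ x = y) := by
  intro x y hx hy
  constructor
  · rintro ⟨T, S, h⟩
    have h1 := h (Pi.single 0 1, 0) (Pi.single 0 1, 0)
    have h3 := h (Pi.single 0 1, 0) (0, Pi.single 2 1)
    have h5 := h ((0 : Fin 2 → ℂ), Pi.single 0 1) (0, Pi.single 2 1)
    have h6 := h ((0 : Fin 2 → ℂ), Pi.single 1 1) (0, Pi.single 2 1)
    simp only [mulA31] at h1 h3 h5 h6
    simp [Pi.single_apply] at h1 h3 h5 h6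
    set a : ℂ := T (Pi.single 0 1) 0 with ha
    -- a ≠ 0
    have haw : T (fun k => if k = 0 then 0 else 1) 1 = a * a := by
      rw [congrFun h1.1 1]; norm_num
    have hane : a ≠ 0 := by
      intro a0
      have hTw : T (fun k => if k = 0 then 0 else 1) = T 0 := by
        rw [map_zero, h1.1, a0]
        funext k; simp
      have := congrFun (T.injective hTw) 1
      norm_num at this
    -- r1 = 0
    have hzero : (fun _ : Fin 3 => (0:ℂ)) = 0 := rfl
    have hr1 : S (Pi.single 2 1) 1 = 0 := by
      have := congrFun h3.2 0
      rw [hzero, map_zero] at this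
      simp at this
      rcases this with h' | h'
      · exact absurd h' hane
      · exact h'
    -- a = q1 * r2
    have hsingle2 : (fun k : Fin 2 => if k = 0 then (1:ℂ) else 0) = Pi.single 0 1 := by
      funext k; simp [Pi.single_apply]
    have h6' : a = S (Pi.single 1 1) 1 * S (Pi.single 2 1) 2
        - S (Pi.single 1 1) 2 * S (Pi.single 2 1) 1 := by
      have := congrFun h6.1 0
      rw [hsingle2] at this
      simpa using this
    -- S f1
    have hsingle3 : (fun k : Fin 3 => if k = 0 then (1:ℂ) else 0) = Pi.single 0 1 := by
      funext k; simp [Pi.single_apply]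
    -- h5: x*a*a = y*(Sf1 0 * r2 - Sf1 2 * r0)
    have hxw : (fun k : Fin 2 => if k = 0 then (0:ℂ) else x)
        = x • (fun k : Fin 2 => if k = 0 then (0:ℂ) else 1) := by
      funext k; by_cases hk : k = 0 <;> simp [hk]
    have h5' : x * (a * a) = y * (S (Pi.single 0 1) 0 * S (Pi.single 2 1) 2
        - S (Pi.single 0 1) 2 * S (Pi.single 2 1) 0) := by
      have := congrFun h5.1 1
      rw [hxw, map_smul] at this
      simp only [Pi.smul_apply, smul_eq_mul, haw] at this
      simpa using this
    -- Need S f1 from h2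
    have h2 := h (Pi.single 0 1, 0) (0, Pi.single 1 1)
    simp only [mulA31] at h2
    simp [Pi.single_apply] at h2
    have hSf1 : S (Pi.single 0 1) = fun k => if k = 0 then a * S (Pi.single 1 1) 1 else 0 := by
      rw [← hsingle3]; exact h2.2
    have hSf10 : S (Pi.single 0 1) 0 = a * S (Pi.single 1 1) 1 := by simp [hSf1]
    have hSf12 : S (Pi.single 0 1) 2 = 0 := by simp [hSf1]
    rw [hSf10, hSf12] at h5'
    rw [hr1] at h6'
    have key : x * (a * a) = y * (a * a) := by
      rw [h5', h6']; ring
    exact mul_right_cancel₀ (mul_ne_zero hane hane) key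
  · rintro rfl
    exact ⟨LinearEquiv.refl ℂ _, LinearEquiv.refl ℂ _, fun u v => by simp⟩

end
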